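/- arXiv:2506.21254 — 2 statements merged into one kernel-verified Lean document; each statement's English description precedes it below -/
import Mathlib

section
/- For every n ≥ 2, the minimum cardinality φ(P_n) of an irregularising multiset of edges of the path P_n equals: n/2 if n ≡ 0 (mod 4); n/2 − 1 if n ≡ 2 (mod 4); and (n − 1)/2 if n is odd. That is, P_n admits an irregularising multiset of edges of that cardinality, and every irregularising multiset of edges of P_n has at least that cardinality. -/
open SimpleGraph

instance {n : ℕ} : DecidableRel (pathGraph n).Adj := fun _ _ =>
  decidable_of_iff _ pathGraph_adj.symm

/-- `incM F u` is the number of elements of the multiset of edges `F` incident to `u`,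
counted with multiplicity. -/
def incM {V : Type*} [DecidableEq V] (F : Multiset (Sym2 V)) (u : V) : ℕ :=
  Multiset.countP (fun e => u ∈ e) F

/-- A multiset `F` of edges of `G` is irregularising if in the multigraph `G + F` no two
adjacent vertices have the same degree. -/
def IrregularisingM {V : Type*} [Fintype V] [DecidableEq V] (G : SimpleGraph V)
    [DecidableRel G.Adj] (F : Multiset (Sym2 V)) : Prop :=
  (∀ e ∈ F, e ∈ G.edgeSet) ∧
    ∀ ⦃u v : V⦄, G.Adj u v → G.degree u + incM F u ≠ G.degree v + incM F v

namespace Stmt17Aux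

open Finset

/-- the j-th edge of the path, as a nat-indexed total function. -/
def eN (n j : ℕ) : Sym2 (Fin (n+1)) :=
  s(⟨j % (n+1), Nat.mod_lt _ (Nat.succ_pos n)⟩, ⟨(j+1) % (n+1), Nat.mod_lt _ (Nat.succ_pos n)⟩)

lemma eN_eq (n j : ℕ) (hj : j < n) :
    eN n j = s(⟨j, by omega⟩, ⟨j+1, by omega⟩) := by
  rw [eN, Sym2.eq_iff]
  exact Or.inl ⟨Fin.ext (Nat.mod_eq_of_lt (by omega)), Fin.ext (Nat.mod_eq_of_lt (by omega))⟩

lemma eN_mem_edgeSet (n j : ℕ) (hj : j < n) : eN n j ∈ (pathGraph (n+1)).edgeSet := by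
  rw [eN_eq n j hj]
  simp [SimpleGraph.mem_edgeSet, pathGraph_adj]

lemma mem_edgeSet_iff (n : ℕ) (e : Sym2 (Fin (n+1))) :
    e ∈ (pathGraph (n+1)).edgeSet ↔ ∃ j < n, e = eN n j := by
  constructor
  · induction e using Sym2.ind with
    | _ u v =>
      intro h
      rw [SimpleGraph.mem_edgeSet, pathGraph_adj] at h
      rcases h with h | h
      · refine ⟨u.val, by omega, ?_⟩
        rw [eN_eq n u.val (by omega), Sym2.eq_iff]
        exact Or.inl ⟨Fin.ext rfl, Fin.ext h.symm⟩
      · refine ⟨v.val, by omega, ?_⟩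
        rw [eN_eq n v.val (by omega), Sym2.eq_iff]
        exact Or.inr ⟨Fin.ext h.symm, Fin.ext rfl⟩
  · rintro ⟨j, hj, rfl⟩; exact eN_mem_edgeSet n j hj

lemma eN_inj (n : ℕ) {j j' : ℕ} (hj : j < n) (hj' : j' < n) (h : eN n j = eN n j') :
    j = j' := by
  rw [eN_eq n j hj, eN_eq n j' hj', Sym2.eq_iff] at h
  simp [Fin.ext_iff] at h
  omega

lemma mem_eN_iff (n k j : ℕ) (hk : k < n + 1) (hj : j < n) :
    (⟨k, hk⟩ : Fin (n+1)) ∈ eN n j ↔ k = j ∨ k = j + 1 := by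
  rw [eN_eq n j hj]
  simp [Sym2.mem_iff, Fin.ext_iff]

lemma card_F_eq (n : ℕ) (F : Multiset (Sym2 (Fin (n+1))))
    (hF : ∀ e ∈ F, e ∈ (pathGraph (n+1)).edgeSet) :
    Multiset.card F = ∑ j ∈ range n, F.count (eN n j) := by
  have hinj : ∀ x ∈ range n, ∀ y ∈ range n, eN n x = eN n y → x = y :=
    fun x hx y hy h => eN_inj n (mem_range.mp hx) (mem_range.mp hy) h
  calc Multiset.card F = ∑ a ∈ F.toFinset, F.count a :=
        (Multiset.toFinset_sum_count_eq F).symm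
    _ = ∑ a ∈ (range n).image (eN n), F.count a := by
        apply Finset.sum_subset
        · intro a ha
          rw [Multiset.mem_toFinset] at ha
          obtain ⟨j, hj, rfl⟩ := (mem_edgeSet_iff n a).mp (hF a ha)
          exact mem_image.mpr ⟨j, mem_range.mpr hj, rfl⟩
        · intro a _ ha
          rw [Multiset.mem_toFinset] at ha
          exact Multiset.count_eq_zero_of_notMem ha
    _ = ∑ j ∈ range n, F.count (eN n j) := Finset.sum_image hinj

lemma incM_eq (n : ℕ) (F : Multiset (Sym2 (Fin (n+1))))
    (hF : ∀ e ∈ F, e ∈ (pathGraph (n+1)).edgeSet) (v : Fin (n+1)) :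
    incM F v = ∑ j ∈ range n, if v ∈ eN n j then F.count (eN n j) else 0 := by
  have hinj : ∀ x ∈ range n, ∀ y ∈ range n, eN n x = eN n y → x = y :=
    fun x hx y hy h => eN_inj n (mem_range.mp hx) (mem_range.mp hy) h
  set Ff := F.filter (fun e => v ∈ e) with hFf
  calc incM F v = ∑ a ∈ Ff.toFinset, Ff.count a := by
        rw [incM, Multiset.countP_eq_card_filter, ← Multiset.toFinset_sum_count_eq]
    _ = ∑ a ∈ (range n).image (eN n), Ff.count a := by
        apply Finset.sum_subset
        · intro a ha
          rw [Multiset.mem_toFinset, hFf, Multiset.mem_filter] at ha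
          obtain ⟨j, hj, rfl⟩ := (mem_edgeSet_iff n a).mp (hF a ha.1)
          exact mem_image.mpr ⟨j, mem_range.mpr hj, rfl⟩
        · intro a _ ha
          rw [Multiset.mem_toFinset] at ha
          exact Multiset.count_eq_zero_of_notMem ha
    _ = ∑ j ∈ range n, Ff.count (eN n j) := Finset.sum_image hinj
    _ = ∑ j ∈ range n, if v ∈ eN n j then F.count (eN n j) else 0 := by
        apply Finset.sum_congr rfl
        intro j _
        rw [hFf, Multiset.count_filter]

lemma deg_zero (n : ℕ) (hn : 1 ≤ n) :
    (pathGraph (n+1)).degree ⟨0, by omega⟩ = 1 := by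
  have : (pathGraph (n+1)).neighborFinset ⟨0, by omega⟩ = {⟨1, by omega⟩} := by
    ext u
    simp only [mem_neighborFinset, pathGraph_adj, Finset.mem_singleton, Fin.ext_iff]
    omega
  rw [degree, this, Finset.card_singleton]

lemma deg_last (n : ℕ) (hn : 1 ≤ n) :
    (pathGraph (n+1)).degree ⟨n, by omega⟩ = 1 := by
  have : (pathGraph (n+1)).neighborFinset ⟨n, by omega⟩ = {⟨n-1, by omega⟩} := by
    ext u
    simp only [mem_neighborFinset, pathGraph_adj, Finset.mem_singleton, Fin.ext_iff]
    omega
  rw [degree, this, Finset.card_singleton]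

lemma deg_mid (n k : ℕ) (h0 : 0 < k) (hk : k < n) :
    (pathGraph (n+1)).degree ⟨k, by omega⟩ = 2 := by
  have : (pathGraph (n+1)).neighborFinset ⟨k, by omega⟩ =
      {⟨k-1, by omega⟩, ⟨k+1, by omega⟩} := by
    ext u
    simp only [mem_neighborFinset, pathGraph_adj, Finset.mem_insert,
      Finset.mem_singleton, Fin.ext_iff]
    omega
  rw [degree, this, Finset.card_insert_of_notMem
    (by simp only [Finset.mem_singleton, Fin.ext_iff]; omega), Finset.card_singleton]

lemma sum_pair (n k : ℕ) (g : ℕ → ℕ) :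
    ∑ j ∈ range n, (if k = j ∨ k = j+1 then g j else 0)
      = (if k < n then g k else 0) + (if 0 < k ∧ k ≤ n then g (k-1) else 0) := by
  have key : ∀ j, (if k = j ∨ k = j+1 then g j else 0)
      = (if j = k then g j else 0) + (if 1 ≤ k ∧ j = k - 1 then g j else 0) := by
    intro j
    split_ifs <;> omega
  rw [Finset.sum_congr rfl (fun j _ => key j), Finset.sum_add_distrib]
  congr 1
  · rw [Finset.sum_ite_eq' (range n) k g]
    simp
  · by_cases hk0 : 1 ≤ k
    · simp only [hk0, true_and]
      rw [Finset.sum_ite_eq' (range n) (k-1) g]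
      simp only [mem_range]
      have : (0 < k ∧ k ≤ n) ↔ (k - 1 < n) := by omega
      rw [if_congr this.symm rfl rfl]
    · simp only [hk0, false_and, if_false, Finset.sum_const_zero]
      rw [if_neg (by omega)]

lemma incM_at (n k : ℕ) (hk : k < n + 1) (F : Multiset (Sym2 (Fin (n+1))))
    (hF : ∀ e ∈ F, e ∈ (pathGraph (n+1)).edgeSet) :
    incM F ⟨k, hk⟩ = (if k < n then F.count (eN n k) else 0)
      + (if 0 < k then F.count (eN n (k-1)) else 0) := by
  rw [incM_eq n F hF ⟨k, hk⟩]
  have : ∀ j ∈ range n, (if (⟨k, hk⟩ : Fin (n+1)) ∈ eN n j then F.count (eN n j) else 0)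
      = (if k = j ∨ k = j + 1 then F.count (eN n j) else 0) := by
    intro j hj
    rw [if_congr (mem_eN_iff n k j hk (mem_range.mp hj)) rfl rfl]
  rw [Finset.sum_congr rfl this, sum_pair n k (fun j => F.count (eN n j))]
  congr 1
  apply if_congr _ rfl rfl
  omega

def pcond (m : ℕ) : Prop := m % 4 = 2 ∨ m % 4 = 3

instance : DecidablePred pcond := fun m => by unfold pcond; infer_instance

def Tn (n : ℕ) : ℕ := ((range n).filter pcond).card

def target (n : ℕ) : ℕ :=
  if n % 4 = 0 then n / 2 else if n % 4 = 2 then n / 2 - 1 else (n - 1) / 2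

lemma Tn_eq (n : ℕ) : Tn n = target n := by
  induction n with
  | zero => rfl
  | succ n ih =>
    have : Tn (n+1) = Tn n + (if pcond n then 1 else 0) := by
      rw [Tn, Tn, Finset.range_add_one, Finset.filter_insert]
      split_ifs with h
      · rw [Finset.card_insert_of_notMem (by simp)]
      · rfl
    rw [this, ih]
    unfold target
    split_ifs <;> simp only [pcond] at * <;> omega

lemma sum_lb (n : ℕ) (g : ℕ → ℕ) (hg : ∀ j, j + 2 < n → g j ≠ g (j + 2)) :
    Tn n ≤ ∑ j ∈ range n, g j := by
  set S := (range n).filter pcond with hS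
  have hmem : ∀ m ∈ S, 2 ≤ m ∧ m < n ∧ pcond m := by
    intro m hm
    rw [hS, Finset.mem_filter, mem_range] at hm
    refine ⟨?_, hm.1, hm.2⟩
    rcases hm.2 with h | h <;> omega
  have hinj : ∀ x ∈ S, ∀ y ∈ S, x - 2 = y - 2 → x = y := by
    intro x hx y hy h
    have := hmem x hx; have := hmem y hy; omega
  have hdisj : Disjoint S (S.image (· - 2)) := by
    rw [Finset.disjoint_left]
    intro a ha ha'
    obtain ⟨b, hb, hba⟩ := Finset.mem_image.mp ha'
    subst hba
    have h1 := hmem _ ha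
    have h2 := hmem b hb
    unfold pcond at h1 h2
    omega
  have hsub : S ∪ S.image (· - 2) ⊆ range n := by
    intro a ha
    rcases Finset.mem_union.mp ha with h | h
    · exact (Finset.mem_filter.mp h).1
    · obtain ⟨b, hb, rfl⟩ := Finset.mem_image.mp h
      have := hmem b hb
      rw [mem_range]; omega
  calc Tn n = S.card := rfl
    _ = ∑ _m ∈ S, 1 := by rw [Finset.sum_const, smul_eq_mul, mul_one]
    _ ≤ ∑ m ∈ S, (g m + g (m - 2)) := by
        apply Finset.sum_le_sum
        intro m hm
        have h := hmem m hm
        have := hg (m - 2) (by omega)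
        rw [show m - 2 + 2 = m by omega] at this
        omega
    _ = ∑ m ∈ S, g m + ∑ m ∈ S, g (m - 2) := Finset.sum_add_distrib
    _ = ∑ m ∈ S, g m + ∑ m ∈ S.image (· - 2), g m := by
        rw [Finset.sum_image hinj]
    _ = ∑ m ∈ S ∪ S.image (· - 2), g m := (Finset.sum_union hdisj).symm
    _ ≤ ∑ j ∈ range n, g j := Finset.sum_le_sum_of_subset hsub

lemma count_F0 (n j : ℕ) (hj : j < n) :
    (((range n).filter pcond).val.map (eN n)).count (eN n j)
      = if pcond j then 1 else 0 := by
  set S := (range n).filter pcond with hS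
  rw [Multiset.count_map]
  have : S.val.filter (fun a => eN n j = eN n a) = S.val.filter (fun a => j = a) := by
    apply Multiset.filter_congr
    intro a ha
    have ha' : a < n := by
      have := Finset.mem_filter.mp (show a ∈ S from ha)
      exact mem_range.mp this.1
    constructor
    · intro h; exact (eN_inj n hj ha' h)
    · rintro rfl; rfl
  rw [this, ← Multiset.count_eq_card_filter_eq, Multiset.count_eq_of_nodup S.nodup]
  have : j ∈ S ↔ pcond j := by
    rw [hS, Finset.mem_filter, mem_range]
    exact ⟨fun h => h.2, fun h => ⟨hj, h⟩⟩
  simp only [Finset.mem_val]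
  rw [if_congr this rfl rfl]

lemma irr_of (n : ℕ) (hn : 2 ≤ n) (F : Multiset (Sym2 (Fin (n+1))))
    (hF : ∀ e ∈ F, e ∈ (pathGraph (n+1)).edgeSet)
    (hcond : ∀ j, j + 2 < n → F.count (eN n j) ≠ F.count (eN n (j+2))) :
    IrregularisingM (pathGraph (n+1)) F := by
  refine ⟨hF, ?_⟩
  have claim : ∀ k (hk1 : k + 1 ≤ n),
      (pathGraph (n+1)).degree ⟨k, by omega⟩ + incM F ⟨k, by omega⟩
        ≠ (pathGraph (n+1)).degree ⟨k+1, by omega⟩ + incM F ⟨k+1, by omega⟩ := by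
    intro k hk1
    rw [incM_at n k (by omega) F hF, incM_at n (k+1) (by omega) F hF]
    by_cases h0 : k = 0
    · subst h0
      rw [deg_zero n (by omega), show (⟨0+1, by omega⟩ : Fin (n+1)) = ⟨1, by omega⟩ from rfl]
      by_cases h1 : 1 < n
      · rw [deg_mid n 1 (by omega) h1]
        simp only [if_pos (show 0 < n by omega), if_neg (lt_irrefl 0), if_pos h1,
          if_pos (show 0 < 1 by omega)]
        rw [show 0+1-1 = 0 from rfl]
        omega
      ·
        omega
    · by_cases hlast : k + 1 = n
      · rw [deg_mid n k (by omega) (by omega),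
          show (⟨k+1, by omega⟩ : Fin (n+1)) = ⟨n, by omega⟩ from Fin.ext (by simp [hlast]),
          deg_last n (by omega)]
        rw [if_pos (by omega : k < n), if_pos (by omega : 0 < k),
          if_neg (by omega : ¬ k + 1 < n), if_pos (by omega : 0 < k + 1),
          show k + 1 - 1 = k from rfl]
        omega
      · rw [deg_mid n k (by omega) (by omega), deg_mid n (k+1) (by omega) (by omega)]
        rw [if_pos (by omega : k < n), if_pos (by omega : k + 1 < n),
          if_pos (by omega : 0 < k + 1)]
        have e1 : k + 1 - 1 = k := by omega
        rw [e1]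
        have := hcond (k-1) (by omega)
        rw [show k - 1 + 2 = k + 1 by omega] at this
        rw [if_pos (show 0 < k by omega)]
        omega
  intro u v hadj
  rcases pathGraph_adj.mp hadj with h | h
  · have hb : (u : ℕ) + 1 ≤ n := by have := v.isLt; omega
    obtain ⟨k, hk⟩ := u
    have hv2 : v = ⟨k+1, Nat.lt_succ_of_le hb⟩ := Fin.ext h.symm
    subst hv2
    exact claim k hb
  · have hb : (v : ℕ) + 1 ≤ n := by have := u.isLt; omega
    obtain ⟨k, hk⟩ := v
    have hu2 : u = ⟨k+1, Nat.lt_succ_of_le hb⟩ := Fin.ext h.symm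
    subst hu2
    exact (claim k hb).symm

end Stmt17Aux

open Stmt17Aux in
/-- for `n ≥ 2`, the minimum cardinality `φ(P_n)` of an irregularising
multiset of edges of the path `P_n` (with `n+1` vertices) is: `n/2` if `n ≡ 0 (mod 4)`,
`n/2 - 1` if `n ≡ 2 (mod 4)`, and `(n-1)/2` if `n` is odd. -/
theorem stmt_17 (n : ℕ) (hn : 2 ≤ n) :
    IsLeast {c : ℕ | ∃ F : Multiset (Sym2 (Fin (n + 1))),
        IrregularisingM (pathGraph (n + 1)) F ∧ Multiset.card F = c}
      (if n % 4 = 0 then n / 2 else if n % 4 = 2 then n / 2 - 1 else (n - 1) / 2) := by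
  have htgt : (if n % 4 = 0 then n / 2 else if n % 4 = 2 then n / 2 - 1 else (n - 1) / 2)
      = target n := rfl
  rw [htgt]
  constructor
  · -- membership: the construction
    set F₀ : Multiset (Sym2 (Fin (n+1))) :=
      ((Finset.range n).filter pcond).val.map (eN n) with hF₀def
    have hF₀edges : ∀ e ∈ F₀, e ∈ (pathGraph (n+1)).edgeSet := by
      intro e he
      rw [hF₀def, Multiset.mem_map] at he
      obtain ⟨j, hj, rfl⟩ := he
      have : j < n := Finset.mem_range.mp (Finset.mem_filter.mp hj).1
      exact eN_mem_edgeSet n j this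
    refine ⟨F₀, irr_of n hn F₀ hF₀edges ?_, ?_⟩
    · intro j hj
      rw [hF₀def, count_F0 n j (by omega), count_F0 n (j+2) (by omega)]
      split_ifs <;> simp only [pcond] at * <;> omega
    · rw [hF₀def, Multiset.card_map, ← Tn_eq]
      rfl
  · -- lower bound
    rintro c ⟨F, hIrr, rfl⟩
    rw [card_F_eq n F hIrr.1, ← Tn_eq]
    apply sum_lb
    intro j hj
    have hadj : (pathGraph (n+1)).Adj ⟨j+1, by omega⟩ ⟨j+2, by omega⟩ :=
      pathGraph_adj.mpr (Or.inl rfl)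
    have h := hIrr.2 hadj
    rw [incM_at n (j+1) (by omega) F hIrr.1, incM_at n (j+2) (by omega) F hIrr.1,
      deg_mid n (j+1) (by omega) (by omega), deg_mid n (j+2) (by omega) (by omega)] at h
    rw [if_pos (by omega : j + 1 < n), if_pos (by omega : 0 < j + 1),
      if_pos (by omega : j + 2 < n), if_pos (by omega : 0 < j + 2)] at h
    have e1 : j + 1 - 1 = j := by omega
    have e2 : j + 2 - 1 = j + 1 := by omega
    rw [e1, e2] at h
    omega
end

section
/- For every n ≥ 2, ML^W(P_n) equals: 0 if n = 2; 1 if n = 3; 2 if n ∈ {4, 5}; and 2n − 10 if n ≥ 6. That is, the path P_n admits an irregularising walk of that length, and every irregularising walk of P_n has at least that length. -/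
open SimpleGraph Finset

variable {V : Type*}

/-- `W.inc u` is the number of edge-traversals of the walk `W` incident to `u`. -/
def SimpleGraph.Walk.inc [DecidableEq V] {G : SimpleGraph V} {a b : V}
    (W : G.Walk a b) (u : V) : ℕ :=
  (W.edges.filter (fun e => u ∈ e)).length

/-- A walk `W` of `G` is irregularising if in the multigraph `G + W` no two
adjacent vertices have the same degree. -/
def SimpleGraph.Walk.Irregularising [Fintype V] [DecidableEq V] {G : SimpleGraph V}
    [DecidableRel G.Adj] {a b : V} (W : G.Walk a b) : Prop :=
  ∀ ⦃u v : V⦄, G.Adj u v → G.degree u + W.inc u ≠ G.degree v + W.inc v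

/-- The vertex sum `σ_ℓ(u)` of a labelling. -/
def vertexSum [Fintype V] [DecidableEq V] (G : SimpleGraph V) [DecidableRel G.Adj]
    (ℓ : Sym2 V → ℕ) (u : V) : ℕ :=
  ∑ w ∈ G.neighborFinset u, ℓ s(u, w)

/-- A labelling is proper if adjacent vertices get distinct sums. -/
def IsProperLabelling [Fintype V] [DecidableEq V] (G : SimpleGraph V) [DecidableRel G.Adj]
    (ℓ : Sym2 V → ℕ) : Prop :=
  ∀ ⦃u v : V⦄, G.Adj u v → vertexSum G ℓ u ≠ vertexSum G ℓ v

/-- Minimum length of an irregularising walk, as an extended natural number. -/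
noncomputable def MLW [Fintype V] [DecidableEq V] (G : SimpleGraph V) [DecidableRel G.Adj] : ℕ∞ :=
  ⨅ (a : V) (b : V) (W : G.Walk a b) (_ : W.Irregularising), (W.length : ℕ∞)

/-- Infimum over irregularising walks of the maximum number of traversals of a single edge. -/
noncomputable def MEW [Fintype V] [DecidableEq V] (G : SimpleGraph V) [DecidableRel G.Adj] : ℕ∞ :=
  ⨅ (a : V) (b : V) (W : G.Walk a b) (_ : W.Irregularising),
    ((W.edges.toFinset.sup fun e => W.edges.count e : ℕ) : ℕ∞)

/-- Infimum over irregularising walks of `max_u inc_W(u)`. -/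
noncomputable def MVW [Fintype V] [DecidableEq V] (G : SimpleGraph V) [DecidableRel G.Adj] : ℕ∞ :=
  ⨅ (a : V) (b : V) (W : G.Walk a b) (_ : W.Irregularising),
    ((Finset.univ.sup fun u => W.inc u : ℕ) : ℕ∞)

namespace Stmt18Aux
variable {n : ℕ}

variable {n : ℕ}

def vtx (n i : ℕ) : Fin (n+1) := ⟨min i n, by omega⟩

def edg (n i : ℕ) : Sym2 (Fin (n+1)) := s(vtx n i, vtx n (i+1))

lemma vtx_val {i : ℕ} (h : i ≤ n) : (vtx n i).val = i := by simp [vtx]; omega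

lemma vtx_inj {i j : ℕ} (hi : i ≤ n) (hj : j ≤ n) (h : vtx n i = vtx n j) : i = j := by
  have := congrArg Fin.val h
  rw [vtx_val hi, vtx_val hj] at this; exact this

lemma adj_vtx {i : ℕ} (h : i < n) : (pathGraph (n+1)).Adj (vtx n i) (vtx n (i+1)) := by
  rw [pathGraph_adj, vtx_val (by omega), vtx_val (by omega)]
  left; rfl

lemma edg_inj {i j : ℕ} (hi : i < n) (hj : j < n) (h : edg n i = edg n j) : i = j := by
  rw [edg, edg, Sym2.eq_iff] at h
  rcases h with ⟨h1, _⟩ | ⟨h1, h2⟩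
  · exact vtx_inj (by omega) (by omega) h1
  · have e1 := vtx_inj (by omega) (by omega) h1
    have e2 := vtx_inj (by omega) (by omega) h2
    omega

lemma edg_diag {i j : ℕ} (hi : i < n) (hj : n ≤ j) : edg n i ≠ edg n j := by
  intro h
  rw [edg, edg, Sym2.eq_iff] at h
  have hji : (vtx n j) = (vtx n (j+1)) := by
    apply Fin.ext; simp [vtx]; omega
  rcases h with ⟨h1, h2⟩ | ⟨h1, h2⟩
  · rw [← hji, ← h1] at h2
    exact absurd (vtx_inj (by omega) (by omega) h2) (by omega)
  · rw [← hji, ← h2] at h1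
    exact absurd (vtx_inj (by omega) (by omega) h1) (by omega)

lemma edg_eq_iff {i : ℕ} (j : ℕ) (hi : i < n) : edg n i = edg n j ↔ i = j := by
  constructor
  · intro h
    by_cases hj : j < n
    · exact edg_inj hi hj h
    · exact absurd h (edg_diag hi (by omega))
  · rintro rfl; rfl

lemma exists_edg {u v : Fin (n+1)} (h : (pathGraph (n+1)).Adj u v) :
    ∃ i < n, s(u, v) = edg n i := by
  have hv := u.isLt
  have hv2 := v.isLt
  rw [pathGraph_adj] at h
  rcases h with h | h
  · refine ⟨u.val, by omega, ?_⟩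
    have h1 : u = vtx n u.val := Fin.ext (by rw [vtx_val (by omega)])
    have h2 : v = vtx n (u.val + 1) := Fin.ext (by rw [vtx_val (by omega)]; omega)
    rw [edg, ← h1, ← h2]
  · refine ⟨v.val, by omega, ?_⟩
    have h1 : v = vtx n v.val := Fin.ext (by rw [vtx_val (by omega)])
    have h2 : u = vtx n (v.val + 1) := Fin.ext (by rw [vtx_val (by omega)]; omega)
    rw [edg, ← h1, ← h2, Sym2.eq_swap]

lemma exists_edg_of_mem {e : Sym2 (Fin (n+1))} (he : e ∈ (pathGraph (n+1)).edgeSet) :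
    ∃ i < n, e = edg n i := by
  induction e using Sym2.ind with
  | _ u v => exact exists_edg ((SimpleGraph.mem_edgeSet _).mp he)

/-- multiplicity of edge `{i, i+1}` in a walk -/
def mcount {a b : Fin (n+1)} (W : (pathGraph (n+1)).Walk a b) (i : ℕ) : ℕ :=
  W.edges.count (edg n i)

lemma mcount_out {a b : Fin (n+1)} (W : (pathGraph (n+1)).Walk a b) {i : ℕ} (h : n ≤ i) :
    mcount W i = 0 := by
  rw [mcount, List.count_eq_zero]
  intro hmem
  obtain ⟨t, ht, hts⟩ := exists_edg_of_mem (W.edges_subset_edgeSet hmem)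
  exact edg_diag ht h hts.symm
section
open SimpleGraph.Walk

lemma inc_nil {a : Fin (n+1)} (u : Fin (n+1)) :
    (SimpleGraph.Walk.nil : (pathGraph (n+1)).Walk a a).inc u = 0 := rfl

lemma inc_cons {G : SimpleGraph V} [DecidableEq V] {a b c : V} (h : G.Adj a b) (W : G.Walk b c) (u : V) :
    (SimpleGraph.Walk.cons h W).inc u = (if u ∈ s(a,b) then 1 else 0) + W.inc u := by
  by_cases hm : u ∈ s(a,b) <;>
    simp [SimpleGraph.Walk.inc, SimpleGraph.Walk.edges_cons, List.filter_cons, hm] <;> omega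

lemma inc_append {G : SimpleGraph V} [DecidableEq V] {a b c : V} (W : G.Walk a b) (W' : G.Walk b c) (u : V) :
    (W.append W').inc u = W.inc u + W'.inc u := by
  simp [SimpleGraph.Walk.inc, SimpleGraph.Walk.edges_append, List.filter_append]

lemma inc_copy {G : SimpleGraph V} [DecidableEq V] {a b a' b' : V} (W : G.Walk a b)
    (h1 : a = a') (h2 : b = b') (u : V) :
    (W.copy h1 h2).inc u = W.inc u := by
  subst h1; subst h2; rfl

lemma inc_parity {G : SimpleGraph V} [DecidableEq V] {a b : V} (W : G.Walk a b) (u : V) :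
    W.inc u % 2 = ((if u = a then 1 else 0) + (if u = b then 1 else 0)) % 2 := by
  induction W with
  | nil =>
    next c =>
    by_cases h : u = c <;> simp [SimpleGraph.Walk.inc, h]
  | @cons x y z h W ih =>
    have hne : x ≠ y := h.ne
    rw [inc_cons]
    by_cases h1 : u = x <;> by_cases h2 : u = y <;>
      simp_all [Sym2.mem_iff] <;> omega

lemma mcount_def {a b : Fin (n+1)} (W : (pathGraph (n+1)).Walk a b) (i : ℕ) :
    mcount W i = W.edges.count (edg n i) := rfl

lemma inc_vtx_zero {a b : Fin (n+1)} (hn : 0 < n) (W : (pathGraph (n+1)).Walk a b) :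
    W.inc (vtx n 0) = mcount W 0 := by
  induction W with
  | nil => rfl
  | @cons x y z h W ih =>
    obtain ⟨i, hi, hs⟩ := exists_edg h
    rw [inc_cons, hs, ih]
    simp only [mcount_def, SimpleGraph.Walk.edges_cons, hs, List.count_cons, beq_iff_eq,
      edg_eq_iff _ hi]
    have hmem : vtx n 0 ∈ edg n i ↔ i = 0 := by
      rw [edg, Sym2.mem_iff]
      constructor
      · rintro (h1 | h1)
        · have := vtx_inj (n := n) (by omega) (by omega) h1; omega
        · have := vtx_inj (n := n) (by omega) (by omega) h1; omega
      · rintro rfl; left; rfl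
    by_cases h0 : i = 0
    · rw [if_pos (hmem.mpr h0), if_pos h0]; omega
    · rw [if_neg (fun hc => h0 (hmem.mp hc)), if_neg h0]; omega

lemma inc_vtx_succ {a b : Fin (n+1)} {j : ℕ} (hj : j < n) (W : (pathGraph (n+1)).Walk a b) :
    W.inc (vtx n (j+1)) = mcount W j + mcount W (j+1) := by
  induction W with
  | nil => rfl
  | @cons x y z h W ih =>
    obtain ⟨i, hi, hs⟩ := exists_edg h
    rw [inc_cons, hs, ih]
    simp only [mcount_def, SimpleGraph.Walk.edges_cons, hs, List.count_cons, beq_iff_eq,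
      edg_eq_iff _ hi]
    have hmem : vtx n (j+1) ∈ edg n i ↔ (i = j ∨ i = j + 1) := by
      rw [edg, Sym2.mem_iff]
      constructor
      · rintro (h1 | h1)
        · have := vtx_inj (n := n) (by omega) (by omega) h1; omega
        · have := vtx_inj (n := n) (by omega) (by omega) h1; omega
      · rintro (rfl | rfl)
        · right; rfl
        · left; rfl
    by_cases h1 : i = j <;> by_cases h2 : i = j + 1
    · omega
    · rw [if_pos (hmem.mpr (Or.inl h1)), if_pos h1, if_neg h2]; omega
    · rw [if_pos (hmem.mpr (Or.inr h2)), if_neg h1, if_pos h2]; omega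
    · rw [if_neg (fun hc => by rcases hmem.mp hc with hh | hh; exact h1 hh; exact h2 hh),
        if_neg h1, if_neg h2]; omega

lemma degree_vtx_mid {j : ℕ} (h0 : 0 < j) (hn : j < n) :
    (pathGraph (n+1)).degree (vtx n j) = 2 := by
  rw [← SimpleGraph.card_neighborFinset_eq_degree]
  have heq : (pathGraph (n+1)).neighborFinset (vtx n j) = {vtx n (j-1), vtx n (j+1)} := by
    ext v
    rw [SimpleGraph.mem_neighborFinset, pathGraph_adj, vtx_val (by omega)]
    have hv := v.isLt
    rw [Finset.mem_insert, Finset.mem_singleton]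
    constructor
    · rintro (h1 | h1)
      · right; apply Fin.ext; rw [vtx_val (by omega)]; omega
      · left; apply Fin.ext; rw [vtx_val (by omega)]; omega
    · rintro (rfl | rfl)
      · right; rw [vtx_val (by omega)] <;> omega
      · left; rw [vtx_val (by omega)] <;> omega
  rw [heq, Finset.card_insert_of_notMem, Finset.card_singleton]
  intro hmem
  rw [Finset.mem_singleton] at hmem
  have := vtx_inj (n := n) (by omega) (by omega) hmem; omega

lemma degree_vtx_zero (hn : 0 < n) : (pathGraph (n+1)).degree (vtx n 0) = 1 := by
  rw [← SimpleGraph.card_neighborFinset_eq_degree]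
  have heq : (pathGraph (n+1)).neighborFinset (vtx n 0) = {vtx n 1} := by
    ext v
    rw [SimpleGraph.mem_neighborFinset, pathGraph_adj, vtx_val (by omega), Finset.mem_singleton]
    have hv := v.isLt
    constructor
    · rintro (h1 | h1)
      · apply Fin.ext; rw [vtx_val (by omega)]; omega
      · omega
    · rintro rfl; left; rw [vtx_val (by omega)]
  rw [heq, Finset.card_singleton]

lemma degree_vtx_last (hn : 0 < n) : (pathGraph (n+1)).degree (vtx n n) = 1 := by
  rw [← SimpleGraph.card_neighborFinset_eq_degree]
  have heq : (pathGraph (n+1)).neighborFinset (vtx n n) = {vtx n (n-1)} := by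
    ext v
    rw [SimpleGraph.mem_neighborFinset, pathGraph_adj, vtx_val (by omega), Finset.mem_singleton]
    have hv := v.isLt
    constructor
    · rintro (h1 | h1)
      · omega
      · apply Fin.ext; rw [vtx_val (by omega)]; omega
    · rintro rfl; right; rw [vtx_val (by omega)]; omega
  rw [heq, Finset.card_singleton]
end

section
open SimpleGraph.Walk

/-- If edge l is not traversed, all support vertices are on the same side as a. -/
lemma support_side {a b : Fin (n+1)} {l : ℕ} (hl : l < n) (W : (pathGraph (n+1)).Walk a b)
    (hW : edg n l ∉ W.edges) : ∀ v ∈ W.support, (v.val ≤ l ↔ a.val ≤ l) := by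
  induction W with
  | nil =>
    intro v hv
    rw [SimpleGraph.Walk.support_nil, List.mem_singleton] at hv
    rw [hv]
  | @cons x y z h W ih =>
    rw [SimpleGraph.Walk.edges_cons] at hW
    have hW1 : s(x,y) ≠ edg n l := fun hc => hW (by rw [← hc]; exact List.mem_cons_self)
    have hW2 : edg n l ∉ W.edges := fun hc => hW (List.mem_cons_of_mem _ hc)
    have hxy : (y.val ≤ l ↔ x.val ≤ l) := by
      rw [pathGraph_adj] at h
      by_contra hc
      apply hW1
      have hx := x.isLt
      have hy := y.isLt
      have : (x.val = l ∧ y.val = l+1) ∨ (x.val = l+1 ∧ y.val = l) := by omega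
      rcases this with ⟨h1, h2⟩ | ⟨h1, h2⟩
      · have e1 : x = vtx n l := Fin.ext (by rw [vtx_val (by omega)]; omega)
        have e2 : y = vtx n (l+1) := Fin.ext (by rw [vtx_val (by omega)]; omega)
        rw [e1, e2]; rfl
      · have e1 : x = vtx n (l+1) := Fin.ext (by rw [vtx_val (by omega)]; omega)
        have e2 : y = vtx n l := Fin.ext (by rw [vtx_val (by omega)]; omega)
        rw [e1, e2, edg, Sym2.eq_swap]
    intro v hv
    rw [SimpleGraph.Walk.support_cons, List.mem_cons] at hv
    rcases hv with rfl | hv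
    · rfl
    · rw [ih hW2 v hv]; exact hxy

/-- interval property of the support of a walk in a path graph -/
lemma mcount_interval {a b : Fin (n+1)} (W : (pathGraph (n+1)).Walk a b) {i j l : ℕ}
    (hij : i ≤ l) (hlj : l ≤ j) (hi : 0 < mcount W i) (hj : 0 < mcount W j) :
    0 < mcount W l := by
  have hjn : j < n := by
    by_contra hc
    rw [mcount_out W (by omega)] at hj; omega
  have hin : i < n := by omega
  rcases Nat.eq_or_lt_of_le hij with rfl | hil
  · exact hi
  rcases Nat.eq_or_lt_of_le hlj with rfl | hlj'
  · exact hj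
  by_contra hc
  have hnotmem : edg n l ∉ W.edges := by
    rw [mcount_def] at hc
    intro hmem
    exact hc (List.count_pos_iff.mpr hmem)
  have hside := support_side (by omega) W hnotmem
  have hmemi : edg n i ∈ W.edges := by
    rw [mcount_def] at hi; exact List.count_pos_iff.mp hi
  have hmemj : edg n j ∈ W.edges := by
    rw [mcount_def] at hj; exact List.count_pos_iff.mp hj
  have hsupi : vtx n (i+1) ∈ W.support := W.snd_mem_support_of_mem_edges (by rw [← edg]; exact hmemi)
  have hsupj : vtx n (j+1) ∈ W.support := W.snd_mem_support_of_mem_edges (by rw [← edg]; exact hmemj)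
  have h1 := hside _ hsupi
  have h2 := hside _ hsupj
  rw [vtx_val (by omega)] at h1
  rw [vtx_val (by omega)] at h2
  omega

/-- generic: sum of counts of distinct elements bounds length -/
lemma sum_count_le_length {α : Type*} [DecidableEq α] (L : List α) (g : ℕ → α) (s : Finset ℕ)
    (hinj : ∀ i ∈ s, ∀ j ∈ s, g i = g j → i = j) :
    ∑ i ∈ s, L.count (g i) ≤ L.length := by
  induction L with
  | nil => simp
  | cons x t ih =>
    have hcnt : ∀ i : ℕ, t.count (g i) + (if g i = x then 1 else 0) = (x :: t).count (g i) := by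
      intro i
      rw [List.count_cons]
      simp only [beq_iff_eq]
      by_cases h : g i = x
      · rw [if_pos h, if_pos h.symm]
      · rw [if_neg h, if_neg (fun hc => h hc.symm)]
    calc ∑ i ∈ s, (x :: t).count (g i)
        = ∑ i ∈ s, (t.count (g i) + if g i = x then 1 else 0) := by
          apply Finset.sum_congr rfl; intro i _; rw [hcnt]
      _ = (∑ i ∈ s, t.count (g i)) + ∑ i ∈ s, (if g i = x then 1 else 0) := by
          rw [Finset.sum_add_distrib]
      _ ≤ t.length + 1 := by
          have h1 : ∑ i ∈ s, (if g i = x then 1 else 0) ≤ 1 := by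
            rw [← Finset.card_filter]
            rw [Finset.card_le_one]
            intro p hp q hq
            rw [Finset.mem_filter] at hp hq
            exact hinj p hp.1 q hq.1 (hp.2.trans hq.2.symm)
          have h2 := ih
          omega
      _ = (x :: t).length := by rw [List.length_cons]

/-- characterization of irregularising walks on path graphs -/
lemma irregularising_iff {a b : Fin (n+1)} (hn : 2 ≤ n) (W : (pathGraph (n+1)).Walk a b) :
    W.Irregularising ↔ ∀ i, i + 3 ≤ n → mcount W i ≠ mcount W (i + 2) := by
  constructor
  · intro hirr i hi
    have hadj : (pathGraph (n+1)).Adj (vtx n (i+1)) (vtx n (i+2)) := by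
      have := adj_vtx (n := n) (i := i+1) (by omega)
      exact this
    have := hirr hadj
    rw [degree_vtx_mid (by omega) (by omega), degree_vtx_mid (by omega) (by omega),
      inc_vtx_succ (by omega), inc_vtx_succ (n := n) (j := i+1) (by omega)] at this
    have hx : mcount W (i+1+1) = mcount W (i+2) := by norm_num
    omega
  · intro hm
    have key : ∀ i, i < n →
        (pathGraph (n+1)).degree (vtx n i) + W.inc (vtx n i) ≠
        (pathGraph (n+1)).degree (vtx n (i+1)) + W.inc (vtx n (i+1)) := by
      intro i hi
      rcases Nat.eq_zero_or_pos i with rfl | hpos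
      · -- edge u0 u1
        rw [degree_vtx_zero (by omega), inc_vtx_zero (by omega),
          inc_vtx_succ (n := n) (j := 0) (by omega),
          degree_vtx_mid (n := n) (j := 1) (by omega) (by omega)]
        omega
      · have hil : (i - 1) + 1 = i := by omega
        have e1 := inc_vtx_succ (n := n) (j := i - 1) (W := W) (by omega)
        rw [hil] at e1
        have e2 := inc_vtx_succ (n := n) (j := i) (W := W) (by omega)
        rcases Nat.eq_or_lt_of_le (show i + 1 ≤ n by omega) with h1 | h1
        · -- i+1 = n : last edge
          have hmn : mcount W (i+1) = 0 := mcount_out W (by omega)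
          have hdeg : (pathGraph (n+1)).degree (vtx n (i+1)) = 1 := by
            rw [show vtx n (i+1) = vtx n n by rw [h1]]
            exact degree_vtx_last (by omega)
          rw [hdeg, degree_vtx_mid (by omega) (by omega), e1, e2, hmn]
          omega
        · -- interior edge
          rw [degree_vtx_mid (by omega) (by omega),
            degree_vtx_mid (n := n) (j := i+1) (by omega) (by omega), e1, e2]
          have := hm (i-1) (by omega)
          have hh : i - 1 + 2 = i + 1 := by omega
          rw [hh] at this
          omega
    intro u v hadj
    rw [pathGraph_adj] at hadj
    have hu := u.isLt
    have hv := v.isLt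
    rcases hadj with h1 | h1
    · have e1 : u = vtx n u.val := Fin.ext (by rw [vtx_val (by omega)])
      have e2 : v = vtx n (u.val+1) := Fin.ext (by rw [vtx_val (by omega)]; omega)
      rw [e1, e2]; exact key u.val (by omega)
    · have e1 : v = vtx n v.val := Fin.ext (by rw [vtx_val (by omega)])
      have e2 : u = vtx n (v.val+1) := Fin.ext (by rw [vtx_val (by omega)]; omega)
      rw [e1, e2]; exact (key v.val (by omega)).symm
end

section

def Wv (a b : ℕ) : ℕ :=
  if a = 1 then (if b = 1 then 3 else if b % 2 = 0 then 3 else 4)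
  else if a % 2 = 0 then (if b = 1 then 3 else 4)
  else (if b = 1 then 4 else if b % 2 = 0 then 3 else 5)

lemma key_base (a b : ℕ) (ha : 1 ≤ a) (hb : 1 ≤ b) :
    4 ≤ (if a % 2 = b % 2 then 0 else 1) + b % 2 + Wv a b := by
  unfold Wv; split_ifs <;> omega

lemma key_step (a b c : ℕ) (ha : 1 ≤ a) (hb : 1 ≤ b) (hc : 1 ≤ c) (hac : a ≠ c) :
    2 + Wv b c ≤ (if a % 2 = b % 2 then 0 else 1) + Wv a b + c := by
  unfold Wv; split_ifs <;> omega

lemma key_fin (a b : ℕ) (ha : 1 ≤ a) (hb : 1 ≤ b) :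
    Wv a b ≤ a + b + a % 2 := by
  unfold Wv; split_ifs <;> omega
lemma key_ind (m : ℕ → ℕ) : ∀ d p, (∀ i, i ≤ d+1 → 1 ≤ m (p+i)) →
    (∀ i, i+2 ≤ d+1 → m (p+i) ≠ m (p+i+2)) →
    2*(d+2) + m p + m (p+1) ≤ (∑ i ∈ Finset.range (d+2), m (p+i))
      + (∑ i ∈ Finset.range (d+1), if m (p+i) % 2 = m (p+i+1) % 2 then 0 else 1)
      + m (p+(d+1)) % 2 + Wv (m p) (m (p+1)) := by
  intro d
  induction d with
  | zero =>
    intro p hpos hne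
    have h0 : 1 ≤ m p := by have := hpos 0 (by omega); simpa using this
    have h1 : 1 ≤ m (p+1) := hpos 1 (by omega)
    have hb := key_base (m p) (m (p+1)) h0 h1
    rw [Finset.sum_range_succ, Finset.sum_range_succ, Finset.sum_range_zero,
      Finset.sum_range_one]
    simp only [Nat.add_zero, Nat.zero_add]
    omega
  | succ d ih =>
    intro p hpos hne
    have IH := ih (p+1)
      (fun i hi => by
        rw [show p+1+i = p+(i+1) from by omega]; exact hpos (i+1) (by omega))
      (fun i hi => by
        rw [show p+1+i = p+(i+1) from by omega]; exact hne (i+1) (by omega))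
    rw [show p+1+1 = p+2 from by omega] at IH
    have hcg1 : ∑ i ∈ Finset.range (d+2), m (p+(i+1)) = ∑ i ∈ Finset.range (d+2), m (p+1+i) :=
      Finset.sum_congr rfl (fun i _ => by rw [show p+(i+1) = p+1+i from by omega])
    have S : (∑ i ∈ Finset.range (d+1+2), m (p+i))
        = m p + ∑ i ∈ Finset.range (d+2), m (p+1+i) := by
      rw [Finset.sum_range_succ', hcg1]
      simp only [Nat.add_zero]
      omega
    have hcg2 : (∑ i ∈ Finset.range (d+1), if m (p+(i+1)) % 2 = m (p+(i+1)+1) % 2 then 0 else 1)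
        = ∑ i ∈ Finset.range (d+1), (if m (p+1+i) % 2 = m (p+1+i+1) % 2 then 0 else 1) :=
      Finset.sum_congr rfl (fun i _ => by rw [show p+(i+1) = p+1+i from by omega])
    have E : (∑ i ∈ Finset.range (d+1+1), if m (p+i) % 2 = m (p+i+1) % 2 then 0 else 1)
        = (if m p % 2 = m (p+1) % 2 then 0 else 1)
          + ∑ i ∈ Finset.range (d+1), (if m (p+1+i) % 2 = m (p+1+i+1) % 2 then 0 else 1) := by
      rw [Finset.sum_range_succ', hcg2]
      simp only [Nat.add_zero]
      omega
    have L : m (p+1+(d+1)) = m (p+(d+1+1)) := by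
      rw [show p+(d+1+1) = p+1+(d+1) from by omega]
    rw [L] at IH
    have h0 : 1 ≤ m p := by have := hpos 0 (by omega); simpa using this
    have h1 : 1 ≤ m (p+1) := hpos 1 (by omega)
    have h2 : 1 ≤ m (p+2) := hpos 2 (by omega)
    have hac : m p ≠ m (p+2) := by have := hne 0 (by omega); simpa using this
    have hS := key_step (m p) (m (p+1)) (m (p+2)) h0 h1 h2 hac
    omega

lemma LBcore (m : ℕ → ℕ) (p d : ℕ)
    (hpos : ∀ i, i ≤ d+1 → 1 ≤ m (p+i))
    (hne : ∀ i, i+2 ≤ d+1 → m (p+i) ≠ m (p+i+2))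
    (hpar : m p % 2 + (∑ i ∈ Finset.range (d+1), if m (p+i) % 2 = m (p+i+1) % 2 then 0 else 1)
      + m (p+(d+1)) % 2 ≤ 2) :
    2*(d+2) ≤ (∑ i ∈ Finset.range (d+2), m (p+i)) + 2 := by
  have h0 : 1 ≤ m p := by have := hpos 0 (by omega); simpa using this
  have h1 : 1 ≤ m (p+1) := hpos 1 (by omega)
  have hk := key_ind m d p hpos hne
  have hf := key_fin (m p) (m (p+1)) h0 h1
  omega

end
section
open SimpleGraph.Walk

lemma sum_indicator_le_one {α : Type*} [DecidableEq α] (s : Finset ℕ) (v : ℕ → α)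
    (hinj : ∀ i ∈ s, ∀ j ∈ s, v i = v j → i = j) (x : α) :
    ∑ i ∈ s, (if v i = x then 1 else 0) ≤ 1 := by
  rw [← Finset.card_filter]
  rw [Finset.card_le_one]
  intro p hp q hq
  rw [Finset.mem_filter] at hp hq
  exact hinj p hp.1 q hq.1 (hp.2.trans hq.2.symm)

lemma lower_bound_ge6 {a b : Fin (n+1)} (hn : 6 ≤ n) (W : (pathGraph (n+1)).Walk a b)
    (hirr : W.Irregularising) : 2*n - 10 ≤ W.length := by
  have hm := (irregularising_iff (by omega) W).mp hirr
  -- support is nonempty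
  have hT : ∃ i, i ∈ (Finset.range n).filter (fun i => 0 < mcount W i) := by
    have h02 := hm 0 (by omega)
    norm_num at h02
    rcases Nat.eq_zero_or_pos (mcount W 0) with h0 | h0
    · exact ⟨2, by simp [Finset.mem_filter]; omega⟩
    · exact ⟨0, by simp [Finset.mem_filter]; omega⟩
  set T := (Finset.range n).filter (fun i => 0 < mcount W i) with hTdef
  have hTne : T.Nonempty := hT
  set p := T.min' hTne with hpdef
  set q := T.max' hTne with hqdef
  have hpT : p ∈ T := T.min'_mem hTne
  have hqT : q ∈ T := T.max'_mem hTne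
  have hppos : 0 < mcount W p := (Finset.mem_filter.mp hpT).2
  have hqpos : 0 < mcount W q := (Finset.mem_filter.mp hqT).2
  have hpn : p < n := Finset.mem_range.mp (Finset.mem_filter.mp hpT).1
  have hqn : q < n := Finset.mem_range.mp (Finset.mem_filter.mp hqT).1
  have hbelow : ∀ i, i < p → mcount W i = 0 := by
    intro i hi
    by_contra hc
    have : i ∈ T := Finset.mem_filter.mpr ⟨Finset.mem_range.mpr (by omega), by omega⟩
    have := T.min'_le i this
    omega
  have habove : ∀ i, q < i → mcount W i = 0 := by
    intro i hi
    rcases Nat.lt_or_ge i n with h | h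
    · by_contra hc
      have : i ∈ T := Finset.mem_filter.mpr ⟨Finset.mem_range.mpr h, by omega⟩
      have := T.le_max' i this
      omega
    · exact mcount_out W h
  have hp2 : p ≤ 2 := by
    by_contra hc
    have h0 : mcount W 0 = 0 := hbelow 0 (by omega)
    have h2 : mcount W 2 = 0 := hbelow 2 (by omega)
    have h02 := hm 0 (by omega)
    norm_num at h02
    exact h02 (by omega)
  have hq3 : n - 3 ≤ q := by
    by_contra hc
    have h0 : mcount W (n-3) = 0 := habove (n-3) (by omega)
    have h2 : mcount W (n-1) = 0 := habove (n-1) (by omega)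
    have := hm (n-3) (by omega)
    rw [show n-3+2 = n-1 from by omega] at this
    exact this (by omega)
  clear_value T p q
  clear hpdef hqdef hTdef hT hpT hqT
  have hpq : p + 1 ≤ q := by omega
  obtain ⟨d, hq_eq⟩ : ∃ d, q = p + (d+1) := ⟨q - p - 1, by omega⟩
  -- positivity on the interval
  have hpos : ∀ i, i ≤ d+1 → 1 ≤ mcount W (p+i) := by
    intro i hi
    have := mcount_interval W (show p ≤ p+i by omega) (show p+i ≤ q by omega) hppos hqpos
    omega
  -- distinctness
  have hne : ∀ i, i+2 ≤ d+1 → mcount W (p+i) ≠ mcount W (p+i+2) := by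
    intro i hi
    exact hm (p+i) (by omega)
  -- parity
  have hf_le : ∀ i, W.inc (vtx n i) % 2 ≤
      (if vtx n i = a then 1 else 0) + (if vtx n i = b then 1 else 0) := by
    intro i
    rw [inc_parity]
    exact Nat.mod_le _ _
  have hfp : mcount W p % 2 = W.inc (vtx n p) % 2 := by
    rcases Nat.eq_zero_or_pos p with rfl | hp0
    · rw [inc_vtx_zero (by omega)]
    · have e := inc_vtx_succ (n := n) (j := p-1) (W := W) (by omega)
      rw [show p-1+1 = p from by omega] at e
      rw [e, hbelow (p-1) (by omega)]
      omega
  have hfq : mcount W (p+(d+1)) % 2 = W.inc (vtx n (p+(d+2))) % 2 := by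
    have e := inc_vtx_succ (n := n) (j := q) (W := W) (by omega)
    rw [habove (q+1) (by omega)] at e
    rw [show p+(d+1) = q from by omega, show p+(d+2) = q+1 from by omega, e]
    omega
  have hchi : ∀ i, i ≤ d → (if mcount W (p+i) % 2 = mcount W (p+i+1) % 2 then 0 else 1)
      = W.inc (vtx n (p+i+1)) % 2 := by
    intro i hi
    have e := inc_vtx_succ (n := n) (j := p+i) (W := W) (by omega)
    rw [e]
    by_cases h : mcount W (p+i) % 2 = mcount W (p+i+1) % 2
    · rw [if_pos h]; omega
    · rw [if_neg h]; omega
  have hc : (∑ i ∈ Finset.range (d+1), if mcount W (p+i) % 2 = mcount W (p+i+1) % 2 then 0 else 1)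
      = ∑ i ∈ Finset.range (d+1), W.inc (vtx n (p+(i+1))) % 2 :=
    Finset.sum_congr rfl (fun i hi => by
      rw [show p+(i+1) = p+i+1 from by omega]
      exact hchi i (by have := Finset.mem_range.mp hi; omega))
  have hR : (∑ i ∈ Finset.range (d+3), W.inc (vtx n (p+i)) % 2)
      = W.inc (vtx n p) % 2 + (∑ i ∈ Finset.range (d+1), W.inc (vtx n (p+(i+1))) % 2)
        + W.inc (vtx n (p+(d+2))) % 2 := by
    rw [show d+3 = (d+2)+1 from rfl, Finset.sum_range_succ, Finset.sum_range_succ']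
    simp only [Nat.add_zero]
    omega
  have hsum_eq : mcount W p % 2
      + (∑ i ∈ Finset.range (d+1), if mcount W (p+i) % 2 = mcount W (p+i+1) % 2 then 0 else 1)
      + mcount W (p+(d+1)) % 2
      = ∑ i ∈ Finset.range (d+3), W.inc (vtx n (p+i)) % 2 := by
    rw [hR, hc]
    omega
  have hsum_le : ∑ i ∈ Finset.range (d+3), W.inc (vtx n (p+i)) % 2 ≤ 2 := by
    have step1 : ∑ i ∈ Finset.range (d+3), W.inc (vtx n (p+i)) % 2
        ≤ ∑ i ∈ Finset.range (d+3),
          ((if vtx n (p+i) = a then 1 else 0) + (if vtx n (p+i) = b then 1 else 0)) :=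
      Finset.sum_le_sum (fun i _ => hf_le (p+i))
    rw [Finset.sum_add_distrib] at step1
    have hinj : ∀ i ∈ Finset.range (d+3), ∀ j ∈ Finset.range (d+3),
        vtx n (p+i) = vtx n (p+j) → i = j := by
      intro i hi j hj hij
      rw [Finset.mem_range] at hi hj
      have := vtx_inj (n := n) (show p+i ≤ n by omega) (show p+j ≤ n by omega) hij
      omega
    have ha := sum_indicator_le_one (Finset.range (d+3)) (fun i => vtx n (p+i)) hinj a
    have hb := sum_indicator_le_one (Finset.range (d+3)) (fun i => vtx n (p+i)) hinj b
    omega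
  have hLB := LBcore (mcount W) p d hpos hne (by rw [hsum_eq]; exact hsum_le)
  have hlen : ∑ i ∈ Finset.range (d+2), mcount W (p+i) ≤ W.length := by
    have hh := sum_count_le_length W.edges (fun i => edg n (p+i)) (Finset.range (d+2))
      (fun i hi j hj hij => by
        rw [Finset.mem_range] at hi hj
        have := edg_inj (show p+i < n by omega) (show p+j < n by omega) hij
        omega)
    rw [SimpleGraph.Walk.length_edges] at hh
    exact hh
  omega

end

section
open SimpleGraph.Walk

lemma lb_small (hn : 3 ≤ n) {a b : Fin (n+1)} (W : (pathGraph (n+1)).Walk a b)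
    (hirr : W.Irregularising) : 1 ≤ W.length := by
  have hm := (irregularising_iff (by omega) W).mp hirr
  have h02 := hm 0 (by omega)
  norm_num at h02
  have hh := sum_count_le_length W.edges (edg n) (Finset.range 3)
    (fun i hi j hj hij => by
      rw [Finset.mem_range] at hi hj
      exact edg_inj (by omega) (by omega) hij)
  rw [SimpleGraph.Walk.length_edges] at hh
  rw [Finset.sum_range_succ, Finset.sum_range_succ, Finset.sum_range_one] at hh
  have e0 : W.edges.count (edg n 0) = mcount W 0 := rfl
  have e2 : W.edges.count (edg n 2) = mcount W 2 := rfl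
  omega

lemma lb_small2 (hn : 4 ≤ n) {a b : Fin (n+1)} (W : (pathGraph (n+1)).Walk a b)
    (hirr : W.Irregularising) : 2 ≤ W.length := by
  have hm := (irregularising_iff (by omega) W).mp hirr
  have h02 := hm 0 (by omega)
  have h13 := hm 1 (by omega)
  norm_num at h02 h13
  have hh := sum_count_le_length W.edges (edg n) (Finset.range 4)
    (fun i hi j hj hij => by
      rw [Finset.mem_range] at hi hj
      exact edg_inj (by omega) (by omega) hij)
  rw [SimpleGraph.Walk.length_edges] at hh
  rw [Finset.sum_range_succ, Finset.sum_range_succ, Finset.sum_range_succ,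
    Finset.sum_range_one] at hh
  have e0 : W.edges.count (edg n 0) = mcount W 0 := rfl
  have e1 : W.edges.count (edg n 1) = mcount W 1 := rfl
  have e2 : W.edges.count (edg n 2) = mcount W 2 := rfl
  have e3 : W.edges.count (edg n 3) = mcount W 3 := rfl
  omega

def stepF (i : ℕ) (h : i < n) : (pathGraph (n+1)).Walk (vtx n i) (vtx n (i+1)) :=
  SimpleGraph.Walk.cons (adj_vtx h) SimpleGraph.Walk.nil

def stepB (i : ℕ) (h : i < n) : (pathGraph (n+1)).Walk (vtx n (i+1)) (vtx n i) :=
  SimpleGraph.Walk.cons (adj_vtx h).symm SimpleGraph.Walk.nil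

lemma edges_stepF (i : ℕ) (h : i < n) : (stepF i h).edges = [edg n i] := rfl

lemma edges_stepB (i : ℕ) (h : i < n) : (stepB i h).edges = [edg n i] := by
  show [s(vtx n (i+1), vtx n i)] = [edg n i]
  rw [edg, Sym2.eq_swap]

lemma mcount_stepF (i t : ℕ) (h : t < n) :
    mcount (stepF t h) i = (if i = t then 1 else 0) := by
  rw [mcount_def, edges_stepF, List.count_singleton]
  simp only [beq_iff_eq]
  by_cases hc : i = t
  · rw [if_pos ((edg_eq_iff i h).mpr hc.symm), if_pos hc]
  · rw [if_neg (fun hc2 => hc ((edg_eq_iff i h).mp hc2).symm), if_neg hc]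

lemma mcount_stepB (i t : ℕ) (h : t < n) :
    mcount (stepB t h) i = (if i = t then 1 else 0) := by
  rw [mcount_def, edges_stepB, List.count_singleton]
  simp only [beq_iff_eq]
  by_cases hc : i = t
  · rw [if_pos ((edg_eq_iff i h).mpr hc.symm), if_pos hc]
  · rw [if_neg (fun hc2 => hc ((edg_eq_iff i h).mp hc2).symm), if_neg hc]

lemma mcount_append {a b c : Fin (n+1)} (W : (pathGraph (n+1)).Walk a b)
    (W' : (pathGraph (n+1)).Walk b c) (i : ℕ) :
    mcount (W.append W') i = mcount W i + mcount W' i := by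
  rw [mcount_def, mcount_def, mcount_def, SimpleGraph.Walk.edges_append, List.count_append]

lemma mcount_copy {a b a' b' : Fin (n+1)} (W : (pathGraph (n+1)).Walk a b)
    (h1 : a = a') (h2 : b = b') (i : ℕ) :
    mcount (W.copy h1 h2) i = mcount W i := by
  subst h1; subst h2; rfl

def zigW (w : ℕ) (h : w + 4 ≤ n) : (pathGraph (n+1)).Walk (vtx n w) (vtx n (w+4)) :=
  (stepF w (by omega)).append ((stepB w (by omega)).append ((stepF w (by omega)).append
    ((stepF (w+1) (by omega)).append ((stepB (w+1) (by omega)).append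
    ((stepF (w+1) (by omega)).append ((stepF (w+2) (by omega)).append
    ((stepF (w+3) (by omega)).copy rfl (congrArg (vtx n) (by omega)))))))))

lemma mcount_zig (w : ℕ) (h : w + 4 ≤ n) (i : ℕ) :
    mcount (zigW w h) i = 3*(if i = w then 1 else 0) + 3*(if i = w+1 then 1 else 0)
      + (if i = w+2 then 1 else 0) + (if i = w+3 then 1 else 0) := by
  rw [zigW]
  rw [mcount_append, mcount_append, mcount_append, mcount_append, mcount_append,
    mcount_append, mcount_append, mcount_copy]
  simp only [mcount_stepF, mcount_stepB]
  split_ifs <;> omega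

lemma length_zig (w : ℕ) (h : w + 4 ≤ n) : (zigW w h).length = 8 := by
  simp [zigW, stepF, stepB]

def coreW : (j : ℕ) → (v : ℕ) → (h : v + 2 + 4*j ≤ n) →
    (pathGraph (n+1)).Walk (vtx n v) (vtx n (v+2+4*j))
  | 0, v, h => ((stepF v (by omega)).append (stepF (v+1) (by omega))).copy rfl
      (congrArg (vtx n) (by omega))
  | (j+1), v, h => (((coreW j v (by omega)).append (zigW (v+2+4*j) (by omega))).copy rfl
      (congrArg (vtx n) (by omega)))

def Mpat (j v i : ℕ) : ℕ :=
  if i < v then 0 else if i < v+2 then 1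
  else if i < v+2+4*j then (if 2 ≤ (i-v) % 4 then 3 else 1) else 0

lemma mcount_core : ∀ (j v : ℕ) (h : v + 2 + 4*j ≤ n) (i : ℕ),
    mcount (coreW j v h) i = Mpat j v i := by
  intro j
  induction j with
  | zero =>
    intro v h i
    rw [coreW, mcount_copy, mcount_append]
    simp only [mcount_stepF, Mpat]
    split_ifs <;> omega
  | succ j ih =>
    intro v h i
    rw [coreW, mcount_copy, mcount_append, ih, mcount_zig]
    simp only [Mpat]
    split_ifs <;> omega

lemma length_core : ∀ (j v : ℕ) (h : v + 2 + 4*j ≤ n),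
    (coreW j v h).length = 2 + 8*j := by
  intro j
  induction j with
  | zero =>
    intro v h
    rw [coreW]
    simp [stepF]
  | succ j ih =>
    intro v h
    rw [coreW]
    rw [SimpleGraph.Walk.length_copy, SimpleGraph.Walk.length_append, ih, length_zig]
    omega
end

section
open SimpleGraph.Walk

def preW (h2 : 2 < n) : (pathGraph (n+1)).Walk (vtx n 3) (vtx n 3) :=
  (stepB 2 h2).append (stepF 2 h2)

lemma mcount_pre (h2 : 2 < n) (i : ℕ) :
    mcount (preW h2) i = 2*(if i = 2 then 1 else 0) := by
  rw [preW, mcount_append]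
  simp only [mcount_stepF, mcount_stepB]
  split_ifs <;> omega

lemma length_pre (h2 : 2 < n) : (preW h2).length = 2 := by
  simp [preW, stepF, stepB]

def suf1W (w : ℕ) (h : w < n) : (pathGraph (n+1)).Walk (vtx n w) (vtx n w) :=
  (stepF w h).append (stepB w h)

lemma mcount_suf1 (w : ℕ) (h : w < n) (i : ℕ) :
    mcount (suf1W w h) i = 2*(if i = w then 1 else 0) := by
  rw [suf1W, mcount_append]
  simp only [mcount_stepF, mcount_stepB]
  split_ifs <;> omega

lemma length_suf1 (w : ℕ) (h : w < n) : (suf1W w h).length = 2 := by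
  simp [suf1W, stepF, stepB]

def suf2W (w : ℕ) (h : w + 2 ≤ n) : (pathGraph (n+1)).Walk (vtx n w) (vtx n w) :=
  (stepF w (by omega)).append ((stepF (w+1) (by omega)).append
    ((stepB (w+1) (by omega)).append (stepB w (by omega))))

lemma mcount_suf2 (w : ℕ) (h : w + 2 ≤ n) (i : ℕ) :
    mcount (suf2W w h) i = 2*(if i = w then 1 else 0) + 2*(if i = w+1 then 1 else 0) := by
  rw [suf2W, mcount_append, mcount_append, mcount_append]
  simp only [mcount_stepF, mcount_stepB]
  split_ifs <;> omega

lemma length_suf2 (w : ℕ) (h : w + 2 ≤ n) : (suf2W w h).length = 4 := by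
  simp [suf2W, stepF, stepB]

lemma ind_spec (i t : ℕ) :
    (i = t ∧ (if i = t then 1 else 0) = 1) ∨ (i ≠ t ∧ (if i = t then (1:ℕ) else 0) = 0) := by
  by_cases h : i = t <;> simp [h]

lemma Mpat_spec (j v i : ℕ) : (i < v ∧ Mpat j v i = 0) ∨ (v ≤ i ∧ i < v+2 ∧ Mpat j v i = 1)
    ∨ (v+2 ≤ i ∧ i < v+2+4*j ∧ 2 ≤ (i-v)%4 ∧ Mpat j v i = 3)
    ∨ (v+2 ≤ i ∧ i < v+2+4*j ∧ (i-v)%4 < 2 ∧ Mpat j v i = 1)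
    ∨ (v+2+4*j ≤ i ∧ Mpat j v i = 0) := by
  unfold Mpat; split_ifs <;> omega

lemma exists_walk_ge6 (hn : 6 ≤ n) :
    ∃ (a b : Fin (n+1)) (W : (pathGraph (n+1)).Walk a b),
      W.Irregularising ∧ W.length = 2*n - 10 := by
  obtain ⟨j, hcase⟩ : ∃ j, n = 4*j+6 ∨ n = 4*j+7 ∨ n = 4*j+8 ∨ n = 4*j+9 :=
    ⟨(n-6)/4, by omega⟩
  rcases hcase with h | h | h | h
  · refine ⟨vtx n 2, vtx n (2+2+4*j), coreW j 2 (by omega), ?_, ?_⟩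
    · rw [irregularising_iff (by omega)]
      intro i hi
      rw [mcount_core, mcount_core]
      have hA := Mpat_spec j 2 i
      have hB := Mpat_spec j 2 (i+2)
      omega
    · rw [length_core]; omega
  · refine ⟨vtx n 3, vtx n (3+2+4*j), (preW (by omega)).append (coreW j 3 (by omega)), ?_, ?_⟩
    · rw [irregularising_iff (by omega)]
      intro i hi
      rw [mcount_append, mcount_append, mcount_core, mcount_core, mcount_pre, mcount_pre]
      have hA := Mpat_spec j 3 i
      have hB := Mpat_spec j 3 (i+2)
      have hC := ind_spec i 2
      have hD := ind_spec (i+2) 2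
      omega
    · rw [SimpleGraph.Walk.length_append, length_core, length_pre]; omega
  · refine ⟨vtx n 3, vtx n (3+2+4*j),
      (preW (by omega)).append ((coreW j 3 (by omega)).append
        (suf1W (3+2+4*j) (by omega))), ?_, ?_⟩
    · rw [irregularising_iff (by omega)]
      intro i hi
      rw [mcount_append, mcount_append, mcount_append, mcount_append,
        mcount_core, mcount_core, mcount_pre, mcount_pre, mcount_suf1, mcount_suf1]
      have hA := Mpat_spec j 3 i
      have hB := Mpat_spec j 3 (i+2)
      have hC := ind_spec i 2
      have hD := ind_spec (i+2) 2
      have hE := ind_spec i (3+2+4*j)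
      have hF := ind_spec (i+2) (3+2+4*j)
      omega
    · rw [SimpleGraph.Walk.length_append, SimpleGraph.Walk.length_append,
        length_core, length_pre, length_suf1]; omega
  · refine ⟨vtx n 3, vtx n (3+2+4*j),
      (preW (by omega)).append ((coreW j 3 (by omega)).append
        (suf2W (3+2+4*j) (by omega))), ?_, ?_⟩
    · rw [irregularising_iff (by omega)]
      intro i hi
      rw [mcount_append, mcount_append, mcount_append, mcount_append,
        mcount_core, mcount_core, mcount_pre, mcount_pre, mcount_suf2, mcount_suf2]
      have hA := Mpat_spec j 3 i
      have hB := Mpat_spec j 3 (i+2)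
      have hC := ind_spec i 2
      have hD := ind_spec (i+2) 2
      have hE := ind_spec i (3+2+4*j)
      have hF := ind_spec (i+2) (3+2+4*j)
      have hG := ind_spec i (3+2+4*j+1)
      have hH := ind_spec (i+2) (3+2+4*j+1)
      omega
    · rw [SimpleGraph.Walk.length_append, SimpleGraph.Walk.length_append,
        length_core, length_pre, length_suf2]; omega

lemma exists_walk_small3 : ∃ (a b : Fin (3+1)) (W : (pathGraph (3+1)).Walk a b),
    W.Irregularising ∧ W.length = 1 := by
  refine ⟨vtx 3 0, vtx 3 1, stepF 0 (by omega), ?_, by simp [stepF]⟩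
  rw [irregularising_iff (by omega)]
  intro i hi
  simp only [mcount_stepF]
  have h1 := ind_spec i 0
  have h2 := ind_spec (i+2) 0
  omega

lemma exists_walk_small4 : ∃ (a b : Fin (4+1)) (W : (pathGraph (4+1)).Walk a b),
    W.Irregularising ∧ W.length = 2 := by
  refine ⟨vtx 4 0, vtx 4 (1+1), (stepF 0 (by omega)).append (stepF 1 (by omega)),
    ?_, by simp [stepF]⟩
  rw [irregularising_iff (by omega)]
  intro i hi
  simp only [mcount_append, mcount_stepF]
  have h1 := ind_spec i 0
  have h2 := ind_spec (i+2) 0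
  have h3 := ind_spec i 1
  have h4 := ind_spec (i+2) 1
  omega

lemma exists_walk_small5 : ∃ (a b : Fin (5+1)) (W : (pathGraph (5+1)).Walk a b),
    W.Irregularising ∧ W.length = 2 := by
  refine ⟨vtx 5 2, vtx 5 (3+1), (stepF 2 (by omega)).append (stepF 3 (by omega)),
    ?_, by simp [stepF]⟩
  rw [irregularising_iff (by omega)]
  intro i hi
  simp only [mcount_append, mcount_stepF]
  have h1 := ind_spec i 2
  have h2 := ind_spec (i+2) 2
  have h3 := ind_spec i 3
  have h4 := ind_spec (i+2) 3
  omega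

lemma exists_walk_small2 : ∃ (a b : Fin (2+1)) (W : (pathGraph (2+1)).Walk a b),
    W.Irregularising ∧ W.length = 0 := by
  refine ⟨vtx 2 0, vtx 2 0, SimpleGraph.Walk.nil, ?_, rfl⟩
  rw [irregularising_iff (by omega)]
  intro i hi
  omega
end

end Stmt18Aux


/-- for `n ≥ 2`, `ML^W(P_n)` (the path with `n+1` vertices) equals `0` if
`n = 2`, `1` if `n = 3`, `2` if `n ∈ {4,5}`, and `2n - 10` if `n ≥ 6`. -/
theorem stmt_18 (n : ℕ) (hn : 2 ≤ n) :
    (∃ (a b : Fin (n + 1)) (W : (pathGraph (n + 1)).Walk a b),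
        W.Irregularising ∧
          W.length = (if n = 2 then 0 else if n = 3 then 1 else if n ≤ 5 then 2
            else 2 * n - 10)) ∧
      (∀ (a b : Fin (n + 1)) (W : (pathGraph (n + 1)).Walk a b), W.Irregularising →
        (if n = 2 then 0 else if n = 3 then 1 else if n ≤ 5 then 2 else 2 * n - 10)
          ≤ W.length) := by
  constructor
  · rcases (show n = 2 ∨ n = 3 ∨ n = 4 ∨ n = 5 ∨ 6 ≤ n from by omega) with
      rfl | rfl | rfl | rfl | h6
    · simpa using Stmt18Aux.exists_walk_small2
    · simpa using Stmt18Aux.exists_walk_small3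
    · simpa using Stmt18Aux.exists_walk_small4
    · simpa using Stmt18Aux.exists_walk_small5
    · rw [if_neg (by omega), if_neg (by omega), if_neg (by omega)]
      exact Stmt18Aux.exists_walk_ge6 h6
  · intro a b W hirr
    rcases (show n = 2 ∨ n = 3 ∨ n = 4 ∨ n = 5 ∨ 6 ≤ n from by omega) with
      rfl | rfl | rfl | rfl | h6
    · simp
    · simpa using Stmt18Aux.lb_small (by omega) W hirr
    · simpa using Stmt18Aux.lb_small2 (by omega) W hirr
    · simpa using Stmt18Aux.lb_small2 (by omega) W hirr
    · rw [if_neg (by omega), if_neg (by omega), if_neg (by omega)]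
      exact Stmt18Aux.lower_bound_ge6 h6 W hirr
end
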